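/- Let D be a variable-wise variable inclusion-like domination rule whose strict domination pairs never have an empty span as right-hand side and whose hitting set number is at most k ∈ ℕ. Let A be a sequential variable-set automaton with state set Q defining the spanner P_A. Then for every document d: |P_A(d)| ≤ |Q|^k · |(η_D P_A)(d)|, where (η_D P_A)(d) is the set of mappings of P_A(d) that are maximal under the domination relation of D on d. -/

import Mathlib

namespace DocSpanners

/-- A span: a pair of endpoint positions `[i, j⟩`. -/
abbrev Span : Type := ℕ × ℕ

/-- `s` is a span of document `d`. -/
def IsSpanOf {α : Type} (d : List α) (s : Span) : Prop :=
  s.1 ≤ s.2 ∧ s.2 ≤ d.length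

/-- A (schemaless) mapping over variable type `V`: a partial assignment of spans. -/
abbrev Mapping (V : Type) : Type := V → Option Span

/-- `m` is a mapping of document `d`. -/
def MappingOf {α V : Type} (d : List α) (m : Mapping V) : Prop :=
  ∀ x s, m x = some s → IsSpanOf d s

/-- A spanner: maps documents to sets of mappings. -/
abbrev Spanner (α V : Type) : Type := List α → Set (Mapping V)

/-- Labels of a variable-set automaton: letters and variable markers. -/
inductive Label (α V : Type) : Type where
  | letter (a : α)
  | vopen (x : V)
  | vclose (x : V)
deriving DecidableEq

/-- The sequence of letters of a ref-word. -/
def letters {α V : Type} (w : List (Label α V)) : List α :=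
  w.filterMap fun l => match l with
    | Label.letter a => some a
    | _ => none

/-- A ref-word is valid if for each variable, either its markers do not appear, or
the opening and closing markers appear exactly once with the opening first. -/
def ValidRef {α V : Type} [DecidableEq α] [DecidableEq V] (w : List (Label α V)) : Prop :=
  ∀ x : V,
    (Label.vopen x ∉ w ∧ Label.vclose x ∉ w) ∨
    (w.count (Label.vopen x) = 1 ∧ w.count (Label.vclose x) = 1 ∧
      w.idxOf (Label.vopen x) < w.idxOf (Label.vclose x))

/-- The mapping defined by a (valid) ref-word: each marked variable is sent to the
span delimited by the positions at which its markers are read. -/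
def refMapping {α V : Type} [DecidableEq α] [DecidableEq V] (w : List (Label α V)) :
    Mapping V := fun x =>
  if Label.vopen x ∈ w then
    some ((letters (w.take (w.idxOf (Label.vopen x)))).length,
          (letters (w.take (w.idxOf (Label.vclose x)))).length)
  else none

/-- A variable-set automaton with state type `Q`. -/
structure VA (α V Q : Type) : Type where
  init : Q
  final : Set Q
  trans : Q → Label α V → Q → Prop

/-- Paths in a VA. -/
inductive VA.Path {α V Q : Type} (A : VA α V Q) : Q → List (Label α V) → Q → Prop where
  | nil (q : Q) : VA.Path A q [] q
  | cons {q q' q'' : Q} {l : Label α V} {w : List (Label α V)} :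
      A.trans q l q' → VA.Path A q' w q'' → VA.Path A q (l :: w) q''

/-- The VA accepts the ref-word `w` (an accepting run reads `w`). -/
def VA.AcceptsRef {α V Q : Type} (A : VA α V Q) (w : List (Label α V)) : Prop :=
  ∃ qf ∈ A.final, A.Path A.init w qf

/-- A VA is sequential if every accepting run is valid. -/
def VA.Sequential {α V Q : Type} [DecidableEq α] [DecidableEq V] (A : VA α V Q) : Prop :=
  ∀ w, A.AcceptsRef w → ValidRef w

/-- The spanner defined by a (sequential) VA. -/
def VA.spanner {α V Q : Type} [DecidableEq α] [DecidableEq V] (A : VA α V Q) :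
    Spanner α V := fun d =>
  {m | ∃ w, A.AcceptsRef w ∧ letters w = d ∧ refMapping w = m}

/-- A spanner is regular if it is defined by some sequential VA with finitely many states. -/
def IsRegular {α V : Type} [DecidableEq α] [DecidableEq V] (P : Spanner α V) : Prop :=
  ∃ (Q : Type) (_ : Fintype Q) (A : VA α V Q), A.Sequential ∧ A.spanner = P

/-- The skyline operator: keep only the mappings of `P d` that are maximal under `R d`. -/
def skyline {α V : Type} (P : Spanner α V)
    (R : List α → Mapping V → Mapping V → Prop) : Spanner α V := fun d =>
  {m | m ∈ P d ∧ ∀ m' ∈ P d, m' ≠ m → ¬ R d m m'}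

/-- The variable inclusion domination relation: `m2` extends `m1`. -/
def varIncRel {V : Type} (m1 m2 : Mapping V) : Prop :=
  ∀ x s, m1 x = some s → m2 x = some s

/-- Two mappings have the same domain. -/
def sameDom {V : Type} (m1 m2 : Mapping V) : Prop :=
  ∀ x, m1 x = none ↔ m2 x = none

/-- The span inclusion domination relation. -/
def spanIncRel {V : Type} (m1 m2 : Mapping V) : Prop :=
  sameDom m1 m2 ∧
    ∀ x s1 s2, m1 x = some s1 → m2 x = some s2 → s2.1 ≤ s1.1 ∧ s1.2 ≤ s2.2

/-- The left-to-right domination relation: same start, `m2` no shorter. -/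
def ltrRel {V : Type} (m1 m2 : Mapping V) : Prop :=
  sameDom m1 m2 ∧
    ∀ x s1 s2, m1 x = some s1 → m2 x = some s2 →
      s1.1 = s2.1 ∧ s1.2 - s1.1 ≤ s2.2 - s2.1

/-- The span length domination relation: `m2`'s spans are no shorter. -/
def spanLenRel {V : Type} (m1 m2 : Mapping V) : Prop :=
  sameDom m1 m2 ∧
    ∀ x s1 s2, m1 x = some s1 → m2 x = some s2 → s1.2 - s1.1 ≤ s2.2 - s2.1


section Aux

variable {α V Q : Type}

@[simp] lemma letters_nil : letters ([] : List (Label α V)) = [] := rfl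

@[simp] lemma letters_cons_letter (a : α) (w : List (Label α V)) :
    letters (Label.letter a :: w) = a :: letters w := rfl

@[simp] lemma letters_cons_vopen (x : V) (w : List (Label α V)) :
    letters (Label.vopen (α := α) x :: w) = letters w := rfl

@[simp] lemma letters_cons_vclose (x : V) (w : List (Label α V)) :
    letters (Label.vclose (α := α) x :: w) = letters w := rfl

lemma letters_append (u v : List (Label α V)) :
    letters (u ++ v) = letters u ++ letters v :=
  List.filterMap_append

lemma letters_take_mono (w : List (Label α V)) {n₁ n₂ : ℕ} (h : n₁ ≤ n₂) :
    (letters (w.take n₁)).length ≤ (letters (w.take n₂)).length := by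
  have hw : w.take n₂ = w.take n₁ ++ (w.drop n₁).take (n₂ - n₁) := by
    rw [← List.take_add, Nat.add_sub_cancel' h]
  rw [hw, letters_append, List.length_append]
  omega

lemma letters_take_le (w : List (Label α V)) (n : ℕ) :
    (letters (w.take n)).length ≤ (letters w).length := by
  conv_rhs => rw [← List.take_append_drop n w]
  rw [letters_append, List.length_append]
  omega

lemma path_append {A : VA α V Q} {q q' q'' : Q} {u v : List (Label α V)}
    (h1 : A.Path q u q') (h2 : A.Path q' v q'') : A.Path q (u ++ v) q'' := by
  induction h1 with
  | nil => exact h2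
  | cons ht _ ih => exact VA.Path.cons ht (ih h2)

lemma path_split {A : VA α V Q} :
    ∀ {u : List (Label α V)} {q q'' : Q} {v : List (Label α V)},
      A.Path q (u ++ v) q'' → ∃ q', A.Path q u q' ∧ A.Path q' v q'' := by
  intro u
  induction u with
  | nil => exact fun h => ⟨_, VA.Path.nil _, h⟩
  | cons l u ih =>
    intro q q'' v h
    cases h with
    | cons ht hp =>
      obtain ⟨q', h1, h2⟩ := ih hp
      exact ⟨q', VA.Path.cons ht h1, h2⟩

lemma split_at_letter :
    ∀ (w : List (Label α V)) (i : ℕ), i < (letters w).length →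
      ∃ (u : List (Label α V)) (a : α) (v : List (Label α V)),
        w = u ++ Label.letter a :: v ∧ (letters u).length = i := by
  intro w
  induction w with
  | nil => intro i h; simp at h
  | cons l w ih =>
    intro i h
    cases l with
    | letter a =>
      cases i with
      | zero => exact ⟨[], a, w, rfl, rfl⟩
      | succ i =>
        simp only [letters_cons_letter, List.length_cons, Nat.succ_lt_succ_iff] at h
        obtain ⟨u, b, v, hw, hl⟩ := ih i h
        exact ⟨Label.letter a :: u, b, v, by simp [hw], by simp [hl]⟩
    | vopen x =>
      simp only [letters_cons_vopen] at h
      obtain ⟨u, b, v, hw, hl⟩ := ih i h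
      exact ⟨Label.vopen x :: u, b, v, by simp [hw], by simp [hl]⟩
    | vclose x =>
      simp only [letters_cons_vclose] at h
      obtain ⟨u, b, v, hw, hl⟩ := ih i h
      exact ⟨Label.vclose x :: u, b, v, by simp [hw], by simp [hl]⟩

variable [DecidableEq α] [DecidableEq V]

lemma refMapping_eq_some {w : List (Label α V)} {x : V} {s : Span}
    (h : refMapping w x = some s) :
    Label.vopen x ∈ w ∧
      s.1 = (letters (w.take (w.idxOf (Label.vopen x)))).length ∧
      s.2 = (letters (w.take (w.idxOf (Label.vclose x)))).length := by
  by_cases hmem : Label.vopen x ∈ w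
  · unfold refMapping at h
    rw [if_pos hmem] at h
    have h' := Option.some.inj h
    exact ⟨hmem, by rw [← h'], by rw [← h']⟩
  · unfold refMapping at h
    rw [if_neg hmem] at h
    exact absurd h (by simp)

lemma refMapping_eq_none {w : List (Label α V)} {x : V}
    (h : refMapping w x = none) : Label.vopen x ∉ w := by
  intro hmem
  unfold refMapping at h
  rw [if_pos hmem] at h
  exact absurd h (by simp)

lemma vclose_not_mem_of_valid {w : List (Label α V)} {x : V}
    (hv : ValidRef w) (h : Label.vopen x ∉ w) : Label.vclose x ∉ w := by
  rcases hv x with ⟨_, h2⟩ | ⟨h1, _, _⟩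
  · exact h2
  · exact absurd (List.count_eq_zero.mpr h) (by omega)

lemma vopen_mem_of_le {w u v : List (Label α V)} {a : α} {x : V} {i : ℕ} {s : Span}
    (hm : refMapping w x = some s) (hw : w = u ++ Label.letter a :: v)
    (hlen : (letters u).length = i) (hs : s.1 ≤ i) : Label.vopen x ∈ u := by
  obtain ⟨hmem, h1, _⟩ := refMapping_eq_some hm
  by_contra hnot
  subst hw
  have hidx : (u ++ Label.letter a :: v).idxOf (Label.vopen x)
      = u.length + (Label.letter a :: v).idxOf (Label.vopen x) :=
    List.idxOf_append_of_notMem hnot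
  have hcons : (Label.letter a :: v).idxOf (Label.vopen x)
      = (v.idxOf (Label.vopen x)) + 1 :=
    List.idxOf_cons_ne _ (by simp)
  set n := (u ++ Label.letter a :: v).idxOf (Label.vopen x) with hn
  have hge : u.length + 1 ≤ n := by omega
  have htake : (u ++ Label.letter a :: v).take n
      = u ++ (Label.letter a :: v).take (n - u.length) := by
    rw [List.take_append, List.take_of_length_le (by omega)]
  obtain ⟨k, hk⟩ : ∃ k, n - u.length = k + 1 := ⟨n - u.length - 1, by omega⟩
  rw [htake, hk] at h1

  rw [List.take_succ_cons] at h1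
  rw [letters_append, letters_cons_letter, List.length_append, List.length_cons] at h1
  omega

lemma vclose_not_mem_of_lt {w u v : List (Label α V)} {a : α} {x : V} {i : ℕ} {s : Span}
    (hm : refMapping w x = some s) (hw : w = u ++ Label.letter a :: v)
    (hlen : (letters u).length = i) (hs : i < s.2) : Label.vclose x ∉ u := by
  intro hin
  obtain ⟨hmem, _, h2⟩ := refMapping_eq_some hm
  subst hw
  have hidx : (u ++ Label.letter a :: v).idxOf (Label.vclose x)
      = u.idxOf (Label.vclose x) := List.idxOf_append_of_mem hin
  have hlt : u.idxOf (Label.vclose x) < u.length := List.idxOf_lt_length_iff.mpr hin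
  set n := (u ++ Label.letter a :: v).idxOf (Label.vclose x) with hn
  have htake : (u ++ Label.letter a :: v).take n = u.take n := by
    rw [List.take_append]
    have : n - u.length = 0 := by omega
    rw [this]
    simp
  rw [htake] at h2
  have hle : (letters (u.take n)).length ≤ (letters u).length := by
    conv_rhs => rw [← List.take_append_drop n u]
    rw [letters_append, List.length_append]; omega
  omega

lemma refMapping_isSpanOf {w : List (Label α V)} (hv : ValidRef w) {x : V} {s : Span}
    (h : refMapping w x = some s) : IsSpanOf (letters w) s := by
  obtain ⟨hmem, h1, h2⟩ := refMapping_eq_some h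
  rcases hv x with ⟨hno, _⟩ | ⟨_, _, hlt⟩
  · exact absurd hmem hno
  · constructor
    · rw [h1, h2]; exact letters_take_mono w (le_of_lt hlt)
    · rw [h2]; exact letters_take_le w _

lemma exchange {A : VA α V Q} (hseq : A.Sequential)
    {w₁ w₂ : List (Label α V)} (hacc₂ : A.AcceptsRef w₂)
    {u₁ v₁ u₂ v₂ : List (Label α V)} {a₁ a₂ : α} {qm qf₂ : Q}
    (hw₁ : w₁ = u₁ ++ Label.letter a₁ :: v₁) (hw₂ : w₂ = u₂ ++ Label.letter a₂ :: v₂)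
    {i : ℕ} (hl₁ : (letters u₁).length = i)
    (hp₁ : A.Path A.init u₁ qm) (hp₂ : A.Path qm (Label.letter a₂ :: v₂) qf₂)
    (hf₂ : qf₂ ∈ A.final)
    {x : V} {s : Span} (hm₁ : refMapping w₁ x = some s) (hm₂ : refMapping w₂ x = none)
    (hs1 : s.1 ≤ i) (hs2 : i < s.2) : False := by
  have hacc : A.AcceptsRef (u₁ ++ Label.letter a₂ :: v₂) :=
    ⟨qf₂, hf₂, path_append hp₁ hp₂⟩
  have hv'' := hseq _ hacc
  have hopen₁ : Label.vopen x ∈ u₁ := vopen_mem_of_le hm₁ hw₁ hl₁ hs1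
  have hclose₁ : Label.vclose x ∉ u₁ := vclose_not_mem_of_lt hm₁ hw₁ hl₁ hs2
  have hopen₂ : Label.vopen x ∉ w₂ := refMapping_eq_none hm₂
  have hclose₂ : Label.vclose x ∉ w₂ := vclose_not_mem_of_valid (hseq _ hacc₂) hopen₂
  rcases hv'' x with ⟨hno, _⟩ | ⟨_, hc, _⟩
  · exact hno (List.mem_append.mpr (Or.inl hopen₁))
  · have hmemc : Label.vclose x ∈ u₁ ++ Label.letter a₂ :: v₂ := by
      by_contra hnot
      rw [List.count_eq_zero.mpr hnot] at hc
      omega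
    rcases List.mem_append.mp hmemc with h | h
    · exact hclose₁ h
    · exact hclose₂ (hw₂ ▸ List.mem_append.mpr (Or.inr h))

lemma exists_maximal {M : Type} (S : Set M) (hS : S.Finite) (r : M → M → Prop)
    (hrefl : ∀ m ∈ S, r m m)
    (htrans : ∀ a b c, a ∈ S → b ∈ S → c ∈ S → r a b → r b c → r a c)
    (hanti : ∀ a b, a ∈ S → b ∈ S → r a b → r b a → a = b) :
    ∀ m ∈ S, ∃ m' ∈ S, r m m' ∧ ∀ m'' ∈ S, m'' ≠ m' → ¬ r m' m'' := by
  have key : ∀ n : ℕ, ∀ m ∈ S, {y ∈ S | r m y ∧ y ≠ m}.ncard ≤ n →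
      ∃ m' ∈ S, r m m' ∧ ∀ m'' ∈ S, m'' ≠ m' → ¬ r m' m'' := by
    intro n
    induction n with
    | zero =>
      intro m hm h0
      refine ⟨m, hm, hrefl m hm, ?_⟩
      intro m'' hm'' hne hr
      have hfin : {y ∈ S | r m y ∧ y ≠ m}.Finite := hS.subset fun y hy => hy.1
      have hpos : 0 < {y ∈ S | r m y ∧ y ≠ m}.ncard :=
        (Set.ncard_pos hfin).mpr ⟨m'', hm'', hr, hne⟩
      omega
    | succ n ih =>
      intro m hm hcard
      by_cases hmax : ∀ m'' ∈ S, m'' ≠ m → ¬ r m m''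
      · exact ⟨m, hm, hrefl m hm, hmax⟩
      · push_neg at hmax
        obtain ⟨m₁, hm₁, hne₁, hr₁⟩ := hmax
        have hfinbig : {y ∈ S | r m y ∧ y ≠ m}.Finite := hS.subset fun y hy => hy.1
        have hsub : {y ∈ S | r m₁ y ∧ y ≠ m₁} ⊆ {y ∈ S | r m y ∧ y ≠ m} \ {m₁} := by
          rintro y ⟨hy, hry, hyne⟩
          refine ⟨⟨hy, htrans m m₁ y hm hm₁ hy hr₁ hry, ?_⟩, hyne⟩
          intro hy_eq
          subst hy_eq
          exact hne₁ (hanti m₁ y hm₁ hy hry hr₁)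
        have hm₁mem : m₁ ∈ {y ∈ S | r m y ∧ y ≠ m} := ⟨hm₁, hr₁, hne₁⟩
        have hlt : {y ∈ S | r m₁ y ∧ y ≠ m₁}.ncard ≤ n := by
          have h1 : ({y ∈ S | r m y ∧ y ≠ m} \ {m₁}).ncard
              = {y ∈ S | r m y ∧ y ≠ m}.ncard - 1 :=
            Set.ncard_diff_singleton_of_mem hm₁mem
          have h2 := Set.ncard_le_ncard hsub hfinbig.sdiff
          omega
        obtain ⟨m', hm', hr', hmax'⟩ := ih m₁ hm₁ hlt
        exact ⟨m', hm', htrans m m₁ m' hm hm₁ hm' hr₁ hr', hmax'⟩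
  intro m hm
  exact key _ m hm le_rfl

lemma ncard_prod' {A B : Type} (s : Set A) (t : Set B) :
    (s ×ˢ t).ncard = s.ncard * t.ncard := by
  rw [← Nat.card_coe_set_eq, ← Nat.card_coe_set_eq, ← Nat.card_coe_set_eq,
    Nat.card_congr (Equiv.Set.prod s t), Nat.card_prod]

end Aux

/-- Let `D` be a single-variable domination rule (a family, for each
document, of partial orders on span-or-undefined values, `none` standing for `−`) that
is variable inclusion-like (every strict pair has `−` as left-hand side), whose strict
pairs never have an empty span as right-hand side, and whose hitting set number is at
most `k`. Then for the variable-wise skyline of the spanner of a sequential VA `A` with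
state set `Q`: `|P_A(d)| ≤ |Q|^k · |(η_D P_A)(d)|` for every document `d`. -/
theorem skyline_size_bound_hitting_set {α V Q : Type} [Fintype α] [DecidableEq α]
    [DecidableEq V] [Fintype Q]
    (D : List α → Option Span → Option Span → Prop)
    (hrefl : ∀ (d : List α) (v : Option Span), (∀ s, v = some s → IsSpanOf d s) → D d v v)
    (htrans : ∀ d v1 v2 v3, D d v1 v2 → D d v2 v3 → D d v1 v3)
    (hanti : ∀ d v1 v2, D d v1 v2 → D d v2 v1 → v1 = v2)
    (hvil : ∀ d v1 v2, D d v1 v2 → v1 ≠ v2 → v1 = none)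
    (hnonempty : ∀ (d : List α) (s : Span), D d none (some s) → s.1 < s.2)
    (k : ℕ)
    (hhs : ∀ d : List α, ∃ H : Finset ℕ, H.card ≤ k ∧
        ∀ s : Span, D d none (some s) → ∃ i ∈ H, s.1 ≤ i ∧ i + 1 ≤ s.2)
    (A : VA α V Q) (hseq : A.Sequential) (d : List α) :
    (A.spanner d).ncard ≤
      Fintype.card Q ^ k *
        (skyline A.spanner (fun d' m1 m2 => ∀ x : V, D d' (m1 x) (m2 x)) d).ncard := by
  classical
  by_cases hfin : (A.spanner d).Finite
  swap
  · rw [Set.Infinite.ncard hfin]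
    exact Nat.zero_le _
  set P := A.spanner d with hP
  set Rel : Mapping V → Mapping V → Prop := fun m1 m2 => ∀ x : V, D d (m1 x) (m2 x) with hRel
  have hmapOf : ∀ m ∈ P, MappingOf d m := by
    rintro m ⟨w, hacc, hlet, hmap⟩
    intro x s hs
    rw [← hmap] at hs
    have := refMapping_isSpanOf (hseq w hacc) hs
    rwa [hlet] at this
  have hRrefl : ∀ m ∈ P, Rel m m := fun m hm x =>
    hrefl d (m x) (fun s hs => hmapOf m hm x s hs)
  have hRtrans : ∀ a b c, a ∈ P → b ∈ P → c ∈ P → Rel a b → Rel b c → Rel a c :=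
    fun a b c _ _ _ h1 h2 x => htrans d _ _ _ (h1 x) (h2 x)
  have hRanti : ∀ a b, a ∈ P → b ∈ P → Rel a b → Rel b a → a = b :=
    fun a b _ _ h1 h2 => funext fun x => hanti d _ _ (h1 x) (h2 x)
  obtain ⟨H, hHcard, hHhit⟩ := hhs d
  set Sky := skyline A.spanner (fun d' m1 m2 => ∀ x : V, D d' (m1 x) (m2 x)) d with hSkyDef
  have hSkySub : Sky ⊆ P := fun m hm => hm.1
  have hmax : ∀ m ∈ P, ∃ m', (m' ∈ Sky) ∧ Rel m m' := by
    intro m hm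
    obtain ⟨m', hm', hr, hmx⟩ := exists_maximal P hfin Rel hRrefl hRtrans hRanti m hm
    exact ⟨m', ⟨hm', hmx⟩, hr⟩
  choose sky hskyMem hskyRel using hmax
  have hruns : ∀ m ∈ P, ∃ (w : List (Label α V)) (qfin : Q), qfin ∈ A.final ∧
      A.Path A.init w qfin ∧ letters w = d ∧ refMapping w = m := by
    rintro m ⟨w, ⟨qfin, hqfin, hpath⟩, hlet, hmap⟩
    exact ⟨w, qfin, hqfin, hpath, hlet, hmap⟩
  choose w qf hqf hpath hlet hmap using hruns
  have hsplits : ∀ (m : Mapping V) (hm : m ∈ P), ∀ i, i < d.length →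
      ∃ (u : List (Label α V)) (a : α) (v : List (Label α V)) (q : Q),
        w m hm = u ++ Label.letter a :: v ∧ (letters u).length = i ∧
        A.Path A.init u q ∧ A.Path q (Label.letter a :: v) (qf m hm) := by
    intro m hm i hi
    obtain ⟨u, a, v, hweq, hl⟩ := split_at_letter (w m hm) i (by rw [hlet m hm]; exact hi)
    have hp := hpath m hm
    rw [hweq] at hp
    obtain ⟨q, hp1, hp2⟩ := path_split hp
    exact ⟨u, a, v, q, hweq, hl, hp1, hp2⟩
  choose uu la lv qmid hw hulen hq1 hq2 using hsplits
  set L := H.sort (· ≤ ·) with hL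
  have hLlen : L.length ≤ k := by rw [hL, Finset.length_sort]; exact hHcard
  set f : Mapping V → Mapping V × (Fin k → Q) := fun m =>
    (if hm : m ∈ P then sky m hm else m,
     fun j => if h : (L.getD j 0) < d.length then
        (if hm : m ∈ P then qmid m hm (L.getD j 0) h else A.init) else A.init) with hf
  have hinj : Set.InjOn f P := by
    intro m₁ h₁ m₂ h₂ hfeq
    by_contra hne
    have hsky_eq : sky m₁ h₁ = sky m₂ h₂ := by
      have := congrArg Prod.fst hfeq
      simpa [hf, h₁, h₂] using this
    have hst : ∀ i, i ∈ H → ∀ hlt : i < d.length,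
        qmid m₁ h₁ i hlt = qmid m₂ h₂ i hlt := by
      intro i hiH hlt
      have hiL : i ∈ L := by rw [hL]; exact (Finset.mem_sort _).mpr hiH
      obtain ⟨j, hget⟩ := List.mem_iff_get.mp hiL
      have hjk : (j : ℕ) < k := lt_of_lt_of_le j.isLt hLlen
      have hgetD : L.getD ((⟨j, hjk⟩ : Fin k) : ℕ) 0 = i := by
        rw [List.getD_eq_getElem (hn := j.isLt)]
        exact hget
      have hcomp := congrArg (fun p => p.2 (⟨(j : ℕ), hjk⟩ : Fin k)) hfeq
      simp only [hf] at hcomp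
      rw [hgetD, dif_pos hlt, dif_pos h₁, dif_pos hlt, dif_pos h₂] at hcomp
      exact hcomp
    have hx : ∃ x, m₁ x ≠ m₂ x := by
      by_contra h
      push_neg at h
      exact hne (funext h)
    obtain ⟨x, hxne⟩ := hx
    have hd₁ : D d (m₁ x) (sky m₁ h₁ x) := hskyRel m₁ h₁ x
    have hd₂ : D d (m₂ x) (sky m₁ h₁ x) := by
      rw [hsky_eq]; exact hskyRel m₂ h₂ x
    cases hm'x : sky m₁ h₁ x with
    | none =>
      rw [hm'x] at hd₁ hd₂
      have e₁ : m₁ x = none := by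
        by_cases h : m₁ x = none
        · exact h
        · exact hvil d (m₁ x) none hd₁ h
      have e₂ : m₂ x = none := by
        by_cases h : m₂ x = none
        · exact h
        · exact hvil d (m₂ x) none hd₂ h
      exact hxne (e₁.trans e₂.symm)
    | some s =>
      rw [hm'x] at hd₁ hd₂
      have key : ∀ (v : Option Span), D d v (some s) → v = some s ∨ v = none := by
        intro v hv
        by_cases h : v = some s
        · exact Or.inl h
        · exact Or.inr (hvil d v (some s) hv h)
      have hDs : D d none (some s) := by
        rcases key (m₁ x) hd₁ with k₁ | k₁
        · rcases key (m₂ x) hd₂ with k₂ | k₂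
          · exact absurd (k₁.trans k₂.symm) hxne
          · rwa [k₂] at hd₂
        · rwa [k₁] at hd₁
      obtain ⟨i, hiH, hile, hilt⟩ := hHhit s hDs
      have hspan : IsSpanOf d s :=
        hmapOf (sky m₁ h₁) (hSkySub (hskyMem m₁ h₁)) x s hm'x
      have hilen : i < d.length := by
        have := hspan.2
        omega
      have contra : ∀ (ma mb : Mapping V) (ha : ma ∈ P) (hb : mb ∈ P),
          ma x = some s → mb x = none →
          qmid ma ha i hilen = qmid mb hb i hilen → False := by
        intro ma mb ha hb hma hmb hq
        refine exchange (x := x) (s := s) hseq ⟨qf mb hb, hqf mb hb, hpath mb hb⟩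
          (hw ma ha i hilen) (hw mb hb i hilen) (hulen ma ha i hilen)
          (hq1 ma ha i hilen) ?_ (hqf mb hb) ?_ ?_ hile (by omega)
        · rw [hq]; exact hq2 mb hb i hilen
        · rw [hmap ma ha]; exact hma
        · rw [hmap mb hb]; exact hmb
      rcases key (m₁ x) hd₁ with k₁ | k₁ <;> rcases key (m₂ x) hd₂ with k₂ | k₂
      · exact hxne (k₁.trans k₂.symm)
      · exact contra m₁ m₂ h₁ h₂ k₁ k₂ (hst i hiH hilen)
      · exact contra m₂ m₁ h₂ h₁ k₂ k₁ (hst i hiH hilen).symm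
      · exact hxne (k₁.trans k₂.symm)
  have hmapsto : ∀ m ∈ P, f m ∈ Sky ×ˢ (Set.univ : Set (Fin k → Q)) := by
    intro m hm
    refine ⟨?_, trivial⟩
    show (f m).1 ∈ Sky
    simp only [hf, dif_pos hm]
    exact hskyMem m hm
  have hfinSky : Sky.Finite := hfin.subset hSkySub
  have htfin : (Sky ×ˢ (Set.univ : Set (Fin k → Q))).Finite :=
    hfinSky.prod Set.finite_univ
  have hle1 := Set.ncard_le_ncard_of_injOn f hmapsto hinj htfin
  rw [ncard_prod'] at hle1
  have huniv : (Set.univ : Set (Fin k → Q)).ncard = Fintype.card Q ^ k := by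
    rw [Set.ncard_univ, Nat.card_eq_fintype_card, Fintype.card_fun, Fintype.card_fin]
  rw [huniv, mul_comm] at hle1
  exact hle1


end DocSpanners
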